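/- Let A ∈ ℝ^{n×n}, B ∈ ℝ^{n×1}, C ∈ ℝ^{1×n}, and let (X, U) ∈ ℝ^{n×1} × ℝ solve the regulator equations A·X + B·U = 0 and C·X = 1. Let K₁ ∈ ℝ^{1×n}, set K₂ = U − K₁·X and Â = A + B·K₁, and let P ∈ ℝ^{n×n} be symmetric positive definite with Âᵀ·P + P·Â = −2·I_n, with λ_P the largest eigenvalue of P. Let 0 < γ < min{1, 1/(2λ_P)} and let y* ∈ ℝ. Suppose x : [0,∞) → ℝ^n and z : [0,∞) → ℝ are continuously differentiable and u : [0,∞) → ℝ satisfies, for all t ≥ 0: ẋ(t) = A·x(t) + B·u(t), u(t) = K₁·x(t) + K₂·z(t) + ū(t), with |ū(t)| ≤ c₁·e^{−γt}, |z(t) − y*| ≤ k·e^{−γ̃t}, and |ż(t)| ≤ k'·e^{−γ̃t} for constants c₁, k, k' ≥ 0 and γ̃ > γ. Then the output y(t) = C·x(t) converges to y* exponentially: there exists K ≥ 0 such that |y(t) − y*| ≤ K·(e^{−t/(2λ_P)} + e^{−γt}) for all t ≥ 0. -/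

import Mathlib

open scoped Matrix

section AuxStmt17

open Matrix

variable {n : ℕ}

lemma aux17_dot_self_nonneg (v : Fin n → ℝ) : 0 ≤ v ⬝ᵥ v :=
  Finset.sum_nonneg fun i _ => mul_self_nonneg _

lemma aux17_vecMulVec_mulVec (w v x : Fin n → ℝ) :
    Matrix.vecMulVec w v *ᵥ x = (v ⬝ᵥ x) • w := by
  ext i
  simp [Matrix.mulVec, Matrix.vecMulVec_apply, dotProduct, Finset.mul_sum,
    Finset.sum_mul, mul_comm, mul_assoc, mul_left_comm]

lemma aux17_mulVec_dot (M : Matrix (Fin n) (Fin n) ℝ) (a b : Fin n → ℝ) :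
    (M *ᵥ a) ⬝ᵥ b = a ⬝ᵥ (Mᵀ *ᵥ b) := by
  rw [dotProduct_comm, Matrix.dotProduct_mulVec, dotProduct_comm,
    Matrix.mulVec_transpose]

lemma aux17_symm_form {Q : Matrix (Fin n) (Fin n) ℝ} (hQ : Qᵀ = Q) (a b : Fin n → ℝ) :
    a ⬝ᵥ (Q *ᵥ b) = b ⬝ᵥ (Q *ᵥ a) := by
  rw [Matrix.dotProduct_mulVec, ← Matrix.mulVec_transpose, hQ, dotProduct_comm]

lemma aux17_cs {Q : Matrix (Fin n) (Fin n) ℝ} (hsym : Qᵀ = Q)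
    (hQ : ∀ v : Fin n → ℝ, 0 ≤ v ⬝ᵥ (Q *ᵥ v)) (a b : Fin n → ℝ) :
    (a ⬝ᵥ (Q *ᵥ b))^2 ≤ (a ⬝ᵥ (Q *ᵥ a)) * (b ⬝ᵥ (Q *ᵥ b)) := by
  have key : ∀ t : ℝ, 0 ≤ (a ⬝ᵥ (Q *ᵥ a)) * (t * t) + (2 * (a ⬝ᵥ (Q *ᵥ b))) * t
      + (b ⬝ᵥ (Q *ᵥ b)) := by
    intro t
    have h0 := hQ (t • a + b)
    have hab := aux17_symm_form hsym a b
    simp only [Matrix.mulVec_add, Matrix.mulVec_smul, add_dotProduct,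
      smul_dotProduct, dotProduct_add, dotProduct_smul,
      smul_eq_mul] at h0
    rw [hab] at h0 ⊢
    nlinarith [h0]
  have := discrim_le_zero key
  rw [discrim] at this
  nlinarith [this]

lemma aux17_dot_cs (a b : Fin n → ℝ) :
    a ⬝ᵥ b ≤ Real.sqrt (a ⬝ᵥ a) * Real.sqrt (b ⬝ᵥ b) := by
  have h := aux17_cs (Q := (1 : Matrix (Fin n) (Fin n) ℝ)) (Matrix.transpose_one)
    (fun v => by simpa using aux17_dot_self_nonneg v) a b
  simp only [Matrix.one_mulVec] at h
  have h1 : a ⬝ᵥ b ≤ Real.sqrt ((a ⬝ᵥ b)^2) := by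
    rw [Real.sqrt_sq_eq_abs]; exact le_abs_self _
  calc a ⬝ᵥ b ≤ Real.sqrt ((a ⬝ᵥ b)^2) := h1
    _ ≤ Real.sqrt ((a ⬝ᵥ a) * (b ⬝ᵥ b)) := Real.sqrt_le_sqrt h
    _ = Real.sqrt (a ⬝ᵥ a) * Real.sqrt (b ⬝ᵥ b) := Real.sqrt_mul (aux17_dot_self_nonneg a) _

lemma aux17_sqrt_dot_add (a b : Fin n → ℝ) :
    Real.sqrt ((a + b) ⬝ᵥ (a + b)) ≤ Real.sqrt (a ⬝ᵥ a) + Real.sqrt (b ⬝ᵥ b) := by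
  have h1 : (a + b) ⬝ᵥ (a + b) ≤ (Real.sqrt (a ⬝ᵥ a) + Real.sqrt (b ⬝ᵥ b))^2 := by
    have hcs := aux17_dot_cs a b
    have ha := Real.sq_sqrt (aux17_dot_self_nonneg a)
    have hb := Real.sq_sqrt (aux17_dot_self_nonneg b)
    simp only [add_dotProduct, dotProduct_add]
    have : b ⬝ᵥ a = a ⬝ᵥ b := dotProduct_comm b a
    nlinarith [Real.sqrt_nonneg (a ⬝ᵥ a), Real.sqrt_nonneg (b ⬝ᵥ b)]
  calc Real.sqrt ((a + b) ⬝ᵥ (a + b))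
      ≤ Real.sqrt ((Real.sqrt (a ⬝ᵥ a) + Real.sqrt (b ⬝ᵥ b))^2) := Real.sqrt_le_sqrt h1
    _ = _ := by rw [Real.sqrt_sq (by positivity)]

lemma aux17_sqrt_dot_smul (c : ℝ) (v : Fin n → ℝ) :
    Real.sqrt ((c • v) ⬝ᵥ (c • v)) = |c| * Real.sqrt (v ⬝ᵥ v) := by
  have : (c • v) ⬝ᵥ (c • v) = c^2 * (v ⬝ᵥ v) := by
    simp [smul_dotProduct, dotProduct_smul, smul_eq_mul]; ring
  rw [this, Real.sqrt_mul (sq_nonneg c), Real.sqrt_sq_eq_abs]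

lemma aux17_lamMax {P : Matrix (Fin n) (Fin n) ℝ} (hP : P.PosDef) {lamP : ℝ}
    (hlamP : ∀ i, hP.1.eigenvalues i ≤ lamP) (v : Fin n → ℝ) :
    v ⬝ᵥ (P *ᵥ v) ≤ lamP * (v ⬝ᵥ v) := by
  have hspec := hP.1.spectral_theorem
  set Vm : Matrix (Fin n) (Fin n) ℝ :=
    (Matrix.IsHermitian.eigenvectorUnitary hP.1 : Matrix (Fin n) (Fin n) ℝ) with hVm
  have hstar : star Vm = Vmᵀ := by
    rw [Matrix.star_eq_conjTranspose, Matrix.conjTranspose_eq_transpose_of_trivial]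
  have hunit : Vm * Vmᵀ = 1 := by
    rw [← hstar]
    exact (Matrix.mem_unitaryGroup_iff).mp (Matrix.IsHermitian.eigenvectorUnitary hP.1).2
  rw [Unitary.conjStarAlgAut_apply, ← hVm, hstar] at hspec
  set D : Matrix (Fin n) (Fin n) ℝ := Matrix.diagonal (RCLike.ofReal ∘ hP.1.eigenvalues) with hD
  have hform : v ⬝ᵥ (P *ᵥ v) = ∑ i, hP.1.eigenvalues i * ((Vmᵀ *ᵥ v) i * (Vmᵀ *ᵥ v) i) := by
    calc v ⬝ᵥ (P *ᵥ v) = v ⬝ᵥ ((Vm * D * Vmᵀ) *ᵥ v) := by rw [← hspec]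
      _ = v ⬝ᵥ (Vm *ᵥ (D *ᵥ (Vmᵀ *ᵥ v))) := by rw [← Matrix.mulVec_mulVec, ← Matrix.mulVec_mulVec]
      _ = (Vm *ᵥ (D *ᵥ (Vmᵀ *ᵥ v))) ⬝ᵥ v := dotProduct_comm _ _
      _ = (D *ᵥ (Vmᵀ *ᵥ v)) ⬝ᵥ (Vmᵀ *ᵥ v) := aux17_mulVec_dot _ _ _
      _ = ∑ i, hP.1.eigenvalues i * ((Vmᵀ *ᵥ v) i * (Vmᵀ *ᵥ v) i) := by
          simp [hD, dotProduct, Matrix.mulVec_diagonal, RCLike.ofReal_real_eq_id,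
            mul_comm, mul_assoc, mul_left_comm]
  have hnorm : v ⬝ᵥ v = ∑ i, (Vmᵀ *ᵥ v) i * (Vmᵀ *ᵥ v) i := by
    calc v ⬝ᵥ v = v ⬝ᵥ ((Vm * Vmᵀ) *ᵥ v) := by rw [hunit, Matrix.one_mulVec]
      _ = v ⬝ᵥ (Vm *ᵥ (Vmᵀ *ᵥ v)) := by rw [← Matrix.mulVec_mulVec]
      _ = (Vm *ᵥ (Vmᵀ *ᵥ v)) ⬝ᵥ v := dotProduct_comm _ _
      _ = (Vmᵀ *ᵥ v) ⬝ᵥ (Vmᵀ *ᵥ v) := aux17_mulVec_dot _ _ _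
      _ = ∑ i, (Vmᵀ *ᵥ v) i * (Vmᵀ *ᵥ v) i := rfl
  rw [hform, hnorm, Finset.mul_sum]
  exact Finset.sum_le_sum fun i _ => mul_le_mul_of_nonneg_right (hlamP i) (mul_self_nonneg _)

lemma aux17_quad_deriv {P : Matrix (Fin n) (Fin n) ℝ} (hsym : Pᵀ = P)
    {w : ℝ → Fin n → ℝ} {wd : Fin n → ℝ} {t : ℝ} (hw : HasDerivAt w wd t) :
    HasDerivAt (fun s => w s ⬝ᵥ (P *ᵥ w s)) (2 * (w t ⬝ᵥ (P *ᵥ wd))) t := by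
  have hwi : ∀ i, HasDerivAt (fun s => w s i) (wd i) t := fun i => hasDerivAt_pi.1 hw i
  have hterm : ∀ i j, HasDerivAt (fun s => w s i * (P i j * w s j))
      (wd i * (P i j * w t j) + w t i * (P i j * wd j)) t := by
    intro i j
    exact (hwi i).mul ((hwi j).const_mul (P i j))
  have hsum : HasDerivAt (fun s => ∑ i, ∑ j, w s i * (P i j * w s j))
      (∑ i, ∑ j, (wd i * (P i j * w t j) + w t i * (P i j * wd j))) t := by
    apply HasDerivAt.fun_sum
    intro i _
    exact HasDerivAt.fun_sum fun j _ => hterm i j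
  have heq : ∀ s, w s ⬝ᵥ (P *ᵥ w s) = ∑ i, ∑ j, w s i * (P i j * w s j) := by
    intro s; simp [dotProduct, Matrix.mulVec, Finset.mul_sum]
  have hds : (∑ i, ∑ j, (wd i * (P i j * w t j) + w t i * (P i j * wd j)))
      = 2 * (w t ⬝ᵥ (P *ᵥ wd)) := by
    have h1 : (∑ i, ∑ j, wd i * (P i j * w t j)) = wd ⬝ᵥ (P *ᵥ w t) := by
      simp [dotProduct, Matrix.mulVec, Finset.mul_sum]
    have h2 : (∑ i, ∑ j, w t i * (P i j * wd j)) = w t ⬝ᵥ (P *ᵥ wd) := by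
      simp [dotProduct, Matrix.mulVec, Finset.mul_sum]
    have h3 : wd ⬝ᵥ (P *ᵥ w t) = w t ⬝ᵥ (P *ᵥ wd) := by
      rw [dotProduct_comm, aux17_mulVec_dot, hsym]
    calc (∑ i, ∑ j, (wd i * (P i j * w t j) + w t i * (P i j * wd j)))
        = (∑ i, ∑ j, wd i * (P i j * w t j)) + (∑ i, ∑ j, w t i * (P i j * wd j)) := by
          rw [← Finset.sum_add_distrib]
          exact Finset.sum_congr rfl fun i _ => Finset.sum_add_distrib
      _ = 2 * (w t ⬝ᵥ (P *ᵥ wd)) := by rw [h1, h2, h3]; ring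
  rw [← hds]
  simpa only [← heq] using (funext heq ▸ hsum)

end AuxStmt17

set_option maxHeartbeats 1000000 in
/-- per-agent core of Theorem 1, item c: the agent `ẋ = Ax + Bu`,
`y = Cx` driven by `u = K₁x + K₂z + ū` with exponentially decaying triggering error
`ū` and exponentially converging generator state `z → y*` (with exponentially decaying
derivative) has output `y(t) = Cx(t)` converging exponentially to `y*`:
`|y(t) − y*| ≤ K(e^{−t/(2λ_P)} + e^{−γt})`. Here `(X, U)` solves the regulator
equations, `K₂ = U − K₁X`, `Â = A + BK₁`, and `P ≻ 0` solves `ÂᵀP + PÂ = −2Iₙ`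
with largest eigenvalue `λ_P`. -/
theorem stmt_17 (n : ℕ) (A : Matrix (Fin n) (Fin n) ℝ) (B C X : Fin n → ℝ) (U : ℝ)
    (hreg1 : A *ᵥ X + U • B = 0) (hreg2 : C ⬝ᵥ X = 1)
    (K1 : Fin n → ℝ) (K2 : ℝ) (hK2 : K2 = U - K1 ⬝ᵥ X)
    (Ahat : Matrix (Fin n) (Fin n) ℝ) (hAhat : Ahat = A + Matrix.vecMulVec B K1)
    (P : Matrix (Fin n) (Fin n) ℝ) (hP : P.PosDef)
    (hlyap : Ahatᵀ * P + P * Ahat = (-2 : ℝ) • (1 : Matrix (Fin n) (Fin n) ℝ))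
    (lamP : ℝ) (hlamP : IsGreatest (Set.range hP.1.eigenvalues) lamP)
    (γ γtil ystar c1 k k' : ℝ)
    (hγ0 : 0 < γ) (hγ1 : γ < 1) (hγ2 : γ < 1 / (2 * lamP)) (hγtil : γ < γtil)
    (hc1 : 0 ≤ c1) (hk : 0 ≤ k) (hk' : 0 ≤ k')
    (x : ℝ → Fin n → ℝ) (z z' u ubar : ℝ → ℝ)
    (hx : ∀ t, 0 ≤ t → HasDerivAt x (A *ᵥ x t + u t • B) t)
    (hz : ∀ t, 0 ≤ t → HasDerivAt z (z' t) t)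
    (hu : ∀ t, 0 ≤ t → u t = K1 ⬝ᵥ x t + K2 * z t + ubar t)
    (hubar : ∀ t, 0 ≤ t → |ubar t| ≤ c1 * Real.exp (-γ * t))
    (hzb : ∀ t, 0 ≤ t → |z t - ystar| ≤ k * Real.exp (-γtil * t))
    (hz'b : ∀ t, 0 ≤ t → |z' t| ≤ k' * Real.exp (-γtil * t)) :
    ∃ K : ℝ, 0 ≤ K ∧ ∀ t, 0 ≤ t →
      |C ⬝ᵥ x t - ystar| ≤ K * (Real.exp (-t / (2 * lamP)) + Real.exp (-γ * t)) := by
  -- basic facts about P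
  have hPsym : Pᵀ = P := by
    have h := hP.1
    rwa [Matrix.IsHermitian, Matrix.conjTranspose_eq_transpose_of_trivial] at h
  have hPpsd : ∀ v : Fin n → ℝ, 0 ≤ v ⬝ᵥ (P *ᵥ v) := by
    intro v
    have h := hP.posSemidef.dotProduct_mulVec_nonneg v
    simpa using h
  have lamP_pos : 0 < lamP := by
    obtain ⟨i, hi⟩ := hlamP.1
    exact hi ▸ hP.eigenvalues_pos i
  have hlam_le : ∀ i, hP.1.eigenvalues i ≤ lamP := fun i => hlamP.2 ⟨i, rfl⟩
  have hdet : IsUnit P.det := isUnit_iff_ne_zero.mpr (ne_of_gt hP.det_pos)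
  -- the output functional is controlled by the P-quadratic form
  have haPC : ∀ v : Fin n → ℝ, (P⁻¹ *ᵥ C) ⬝ᵥ (P *ᵥ v) = C ⬝ᵥ v := by
    intro v
    rw [Matrix.dotProduct_mulVec]
    congr 1
    calc (P⁻¹ *ᵥ C) ᵥ* P = Pᵀ *ᵥ (P⁻¹ *ᵥ C) := (Matrix.mulVec_transpose P _).symm
      _ = (Pᵀ * P⁻¹) *ᵥ C := Matrix.mulVec_mulVec _ _ _
      _ = C := by rw [hPsym, Matrix.mul_nonsing_inv P hdet, Matrix.one_mulVec]
  obtain ⟨cC, hcCdef⟩ : ∃ cC : ℝ, cC = Real.sqrt ((P⁻¹ *ᵥ C) ⬝ᵥ (P *ᵥ (P⁻¹ *ᵥ C))) := ⟨_, rfl⟩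
  have hcC0 : 0 ≤ cC := hcCdef ▸ Real.sqrt_nonneg _
  have hCw : ∀ v : Fin n → ℝ, |C ⬝ᵥ v| ≤ cC * Real.sqrt (v ⬝ᵥ (P *ᵥ v)) := by
    intro v
    have h := aux17_cs hPsym hPpsd (P⁻¹ *ᵥ C) v
    rw [haPC v] at h
    have h2 := Real.sqrt_le_sqrt h
    rw [Real.sqrt_sq_eq_abs, Real.sqrt_mul (hPpsd _)] at h2
    rw [hcCdef]
    exact h2
  -- the shifted state and the perturbation
  obtain ⟨w, hwdef⟩ : ∃ w : ℝ → Fin n → ℝ, w = fun s => x s - z s • X := ⟨_, rfl⟩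
  obtain ⟨g, hgdef⟩ : ∃ g : ℝ → Fin n → ℝ, g = fun s => ubar s • B - z' s • X := ⟨_, rfl⟩
  have hAX : A *ᵥ X = -(U • B) := eq_neg_of_add_eq_zero_left hreg1
  have hw' : ∀ t, 0 ≤ t → HasDerivAt w (Ahat *ᵥ w t + g t) t := by
    intro t ht
    rw [hwdef, hgdef]
    have hd : HasDerivAt (fun s => x s - z s • X) (A *ᵥ x t + u t • B - z' t • X) t :=
      (hx t ht).sub ((hz t ht).smul_const X)
    convert hd using 1
    rw [hAhat, hu t ht, hK2, Matrix.add_mulVec, aux17_vecMulVec_mulVec, Matrix.mulVec_sub,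
      Matrix.mulVec_smul, hAX]
    ext i
    simp only [dotProduct_sub, dotProduct_smul, smul_eq_mul, Pi.add_apply,
      Pi.sub_apply, Pi.smul_apply, Pi.neg_apply]
    ring
  obtain ⟨V, hVdef⟩ : ∃ V : ℝ → ℝ, V = fun s => w s ⬝ᵥ (P *ᵥ w s) := ⟨_, rfl⟩
  obtain ⟨Vd, hVddef⟩ : ∃ Vd : ℝ → ℝ,
      Vd = fun s => 2 * (w s ⬝ᵥ (P *ᵥ (Ahat *ᵥ w s + g s))) := ⟨_, rfl⟩
  have hVnn : ∀ s, 0 ≤ V s := by intro s; rw [hVdef]; exact hPpsd _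
  have hVd : ∀ t, 0 ≤ t → HasDerivAt V (Vd t) t := by
    intro t ht
    rw [hVdef, hVddef]
    exact aux17_quad_deriv hPsym (hw' t ht)
  -- norm bound on the perturbation
  obtain ⟨cg, hcgdef⟩ : ∃ cg : ℝ,
      cg = c1 * Real.sqrt (B ⬝ᵥ B) + k' * Real.sqrt (X ⬝ᵥ X) := ⟨_, rfl⟩
  have hcg0 : 0 ≤ cg := by
    rw [hcgdef]
    have := Real.sqrt_nonneg (B ⬝ᵥ B); have := Real.sqrt_nonneg (X ⬝ᵥ X); positivity
  have hgb : ∀ t, 0 ≤ t → Real.sqrt (g t ⬝ᵥ g t) ≤ cg * Real.exp (-γ * t) := by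
    intro t ht
    have hexp : Real.exp (-γtil * t) ≤ Real.exp (-γ * t) :=
      Real.exp_le_exp.mpr (by nlinarith)
    have hsplit : g t = ubar t • B + (-z' t) • X := by
      rw [hgdef]; simp [sub_eq_add_neg, neg_smul]
    rw [hsplit]
    calc Real.sqrt ((ubar t • B + (-z' t) • X) ⬝ᵥ (ubar t • B + (-z' t) • X))
        ≤ Real.sqrt ((ubar t • B) ⬝ᵥ (ubar t • B))
            + Real.sqrt (((-z' t) • X) ⬝ᵥ ((-z' t) • X)) := aux17_sqrt_dot_add _ _
      _ = |ubar t| * Real.sqrt (B ⬝ᵥ B) + |z' t| * Real.sqrt (X ⬝ᵥ X) := by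
          rw [aux17_sqrt_dot_smul, aux17_sqrt_dot_smul, abs_neg]
      _ ≤ (c1 * Real.exp (-γ * t)) * Real.sqrt (B ⬝ᵥ B)
            + (k' * Real.exp (-γtil * t)) * Real.sqrt (X ⬝ᵥ X) :=
          add_le_add (mul_le_mul_of_nonneg_right (hubar t ht) (Real.sqrt_nonneg _))
            (mul_le_mul_of_nonneg_right (hz'b t ht) (Real.sqrt_nonneg _))
      _ ≤ cg * Real.exp (-γ * t) := by
          rw [hcgdef]
          nlinarith [Real.sqrt_nonneg (B ⬝ᵥ B), Real.sqrt_nonneg (X ⬝ᵥ X),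
            Real.exp_pos (-γtil * t), Real.exp_pos (-γ * t),
            mul_le_mul_of_nonneg_left hexp hk']
  -- the differential inequality for V
  obtain ⟨q, hqdef⟩ : ∃ q : ℝ, q = Real.sqrt lamP * cg := ⟨_, rfl⟩
  have hq0 : 0 ≤ q := by rw [hqdef]; positivity
  have hVd_le : ∀ t, 0 ≤ t →
      Vd t ≤ -(1/lamP) * V t + 2 * q * Real.exp (-γ * t) * Real.sqrt (V t) := by
    intro t ht
    have e1 : Vd t = 2 * (w t ⬝ᵥ (P *ᵥ (Ahat *ᵥ w t))) + 2 * (w t ⬝ᵥ (P *ᵥ g t)) := by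
      rw [hVddef]
      simp only []
      rw [Matrix.mulVec_add, dotProduct_add]
      ring
    have hly := congrArg (fun M : Matrix (Fin n) (Fin n) ℝ => w t ⬝ᵥ (M *ᵥ w t)) hlyap
    simp only [Matrix.add_mulVec, dotProduct_add, Matrix.smul_mulVec,
      Matrix.one_mulVec, dotProduct_smul, smul_eq_mul, ← Matrix.mulVec_mulVec] at hly
    have h1 : w t ⬝ᵥ (Ahatᵀ *ᵥ (P *ᵥ w t)) = w t ⬝ᵥ (P *ᵥ (Ahat *ᵥ w t)) := by
      calc w t ⬝ᵥ (Ahatᵀ *ᵥ (P *ᵥ w t))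
          = (Ahatᵀ *ᵥ (P *ᵥ w t)) ⬝ᵥ w t := dotProduct_comm _ _
        _ = (P *ᵥ w t) ⬝ᵥ (Ahatᵀᵀ *ᵥ w t) := aux17_mulVec_dot _ _ _
        _ = (P *ᵥ w t) ⬝ᵥ (Ahat *ᵥ w t) := by rw [Matrix.transpose_transpose]
        _ = w t ⬝ᵥ (Pᵀ *ᵥ (Ahat *ᵥ w t)) := aux17_mulVec_dot _ _ _
        _ = w t ⬝ᵥ (P *ᵥ (Ahat *ᵥ w t)) := by rw [hPsym]
    rw [h1] at hly
    have hlyterm : 2 * (w t ⬝ᵥ (P *ᵥ (Ahat *ᵥ w t))) = -2 * (w t ⬝ᵥ w t) := by linarith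
    have hV_le : V t ≤ lamP * (w t ⬝ᵥ w t) := by
      rw [hVdef]; exact aux17_lamMax hP hlam_le _
    have hwq : 0 ≤ w t ⬝ᵥ w t := aux17_dot_self_nonneg _
    have hcross : w t ⬝ᵥ (P *ᵥ g t) ≤ q * Real.exp (-γ * t) * Real.sqrt (V t) := by
      have hcs := aux17_cs hPsym hPpsd (w t) (g t)
      have hgP : g t ⬝ᵥ (P *ᵥ g t) ≤ lamP * (g t ⬝ᵥ g t) := aux17_lamMax hP hlam_le _
      have h2 : (w t ⬝ᵥ (P *ᵥ g t))^2 ≤ V t * (lamP * (g t ⬝ᵥ g t)) := by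
        rw [hVdef]
        calc (w t ⬝ᵥ (P *ᵥ g t))^2
            ≤ (w t ⬝ᵥ (P *ᵥ w t)) * (g t ⬝ᵥ (P *ᵥ g t)) := hcs
          _ ≤ (w t ⬝ᵥ (P *ᵥ w t)) * (lamP * (g t ⬝ᵥ g t)) :=
              mul_le_mul_of_nonneg_left hgP (hPpsd _)
      have h3 : w t ⬝ᵥ (P *ᵥ g t) ≤ Real.sqrt (V t * (lamP * (g t ⬝ᵥ g t))) := by
        have h4 := Real.sqrt_le_sqrt h2
        rw [Real.sqrt_sq_eq_abs] at h4
        exact (le_abs_self _).trans h4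
      have h4 : Real.sqrt (V t * (lamP * (g t ⬝ᵥ g t)))
          = Real.sqrt (V t) * (Real.sqrt lamP * Real.sqrt (g t ⬝ᵥ g t)) := by
        rw [Real.sqrt_mul (hVnn t), Real.sqrt_mul lamP_pos.le]
      have h5 : Real.sqrt lamP * Real.sqrt (g t ⬝ᵥ g t) ≤ q * Real.exp (-γ * t) := by
        rw [hqdef, mul_assoc]
        exact mul_le_mul_of_nonneg_left (hgb t ht) (Real.sqrt_nonneg _)
      calc w t ⬝ᵥ (P *ᵥ g t)
          ≤ Real.sqrt (V t) * (Real.sqrt lamP * Real.sqrt (g t ⬝ᵥ g t)) := by rw [← h4]; exact h3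
        _ ≤ Real.sqrt (V t) * (q * Real.exp (-γ * t)) :=
            mul_le_mul_of_nonneg_left h5 (Real.sqrt_nonneg _)
        _ = q * Real.exp (-γ * t) * Real.sqrt (V t) := by ring
    have hVlam : (1/lamP) * V t ≤ w t ⬝ᵥ w t := by
      have hpos : (0:ℝ) < 1/lamP := by positivity
      have h6 := mul_le_mul_of_nonneg_left hV_le hpos.le
      calc (1/lamP) * V t ≤ (1/lamP) * (lamP * (w t ⬝ᵥ w t)) := h6
        _ = w t ⬝ᵥ w t := by field_simp
    rw [e1]
    linarith [hcross, hlyterm, hVlam, hwq]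
  -- Grönwall comparison
  obtain ⟨Kc, hKcdef⟩ : ∃ Kc : ℝ, Kc = -(1/(2*lamP)) := ⟨_, rfl⟩
  have hil2 : (0:ℝ) < 1/(2*lamP) := by positivity
  have hKcneg : Kc < 0 := by rw [hKcdef]; linarith
  have hden : 0 < 1/(2*lamP) - γ := sub_pos.mpr hγ2
  obtain ⟨M, hMdef⟩ : ∃ M : ℝ, M = q / (1/(2*lamP) - γ) := ⟨_, rfl⟩
  have hM0 : 0 ≤ M := hMdef ▸ div_nonneg hq0 hden.le
  have hqe : M * (1/(2*lamP)) - γ * M = q := by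
    have h9 : M * (1/(2*lamP)) - γ * M = M * (1/(2*lamP) - γ) := by ring
    rw [h9, hMdef, div_mul_cancel₀ _ hden.ne']
  have hmain : ∀ t, 0 ≤ t →
      Real.sqrt (V t) ≤ Real.sqrt (V 0) * Real.exp (Kc * t) + M * Real.exp (-γ * t) := by
    intro t ht
    have key : ∀ ε : ℝ, 0 < ε → Real.sqrt (V t) ≤
        Real.sqrt (V 0) * Real.exp (Kc * t) + M * Real.exp (-γ * t) + 2*ε := by
      intro ε hε
      obtain ⟨sE, hsEdef⟩ : ∃ sE : ℝ → ℝ, sE = fun s => Real.sqrt (V s + ε^2) := ⟨_, rfl⟩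
      obtain ⟨f, hfdef⟩ : ∃ f : ℝ → ℝ, f = fun s => sE s - M * Real.exp (-γ * s) := ⟨_, rfl⟩
      obtain ⟨fd, hfddef⟩ : ∃ fd : ℝ → ℝ,
          fd = fun s => Vd s / (2 * sE s) + M * (γ * Real.exp (-γ * s)) := ⟨_, rfl⟩
      have hVε_pos : ∀ s, 0 < V s + ε^2 := fun s => by nlinarith [hVnn s]
      have hsE_ge : ∀ s, ε ≤ sE s := by
        intro s
        rw [hsEdef]
        calc ε = Real.sqrt (ε^2) := by rw [Real.sqrt_sq hε.le]
          _ ≤ _ := Real.sqrt_le_sqrt (by nlinarith [hVnn s])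
      have hsE_pos : ∀ s, 0 < sE s := fun s => lt_of_lt_of_le hε (hsE_ge s)
      have hsq : ∀ s, sE s ^ 2 = V s + ε^2 := by
        intro s; rw [hsEdef]; exact Real.sq_sqrt (hVε_pos s).le
      have hsqV : ∀ s, Real.sqrt (V s) ≤ sE s := by
        intro s; rw [hsEdef]; exact Real.sqrt_le_sqrt (by nlinarith)
      have hfd : ∀ s, 0 ≤ s → HasDerivAt f (fd s) s := by
        intro s hs
        have h1 : HasDerivAt (fun r => V r + ε^2) (Vd s) s := (hVd s hs).add_const _
        have h2 := h1.sqrt (hVε_pos s).ne'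
        have h3 : HasDerivAt (fun r => M * Real.exp (-γ * r))
            (M * (Real.exp (-γ * s) * (-γ * 1))) s :=
          (((hasDerivAt_id s).const_mul (-γ)).exp).const_mul M
        have h4 := h2.sub h3
        have hfeq : f = fun r => Real.sqrt (V r + ε^2) - M * Real.exp (-γ * r) := by
          funext r
          simp only [hfdef, hsEdef]
        have hdeq : fd s = Vd s / (2 * Real.sqrt (V s + ε^2))
            - M * (Real.exp (-γ * s) * (-γ * 1)) := by
          simp only [hfddef, hsEdef]
          ring
        rw [hfeq, hdeq]
        exact h4
      have hbound : ∀ s, 0 ≤ s → fd s ≤ Kc * f s + ε/(2*lamP) := by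
        intro s hs
        have hVdle := hVd_le s hs
        have hS : 0 < sE s := hsE_pos s
        have hSe : ε ≤ sE s := hsE_ge s
        have hsqs := hsq s
        have hsqVs := hsqV s
        have he : (0:ℝ) < Real.exp (-γ * s) := Real.exp_pos _
        have hinner : Kc * f s + ε/(2*lamP) - M * (γ * Real.exp (-γ * s))
            = -(1/(2*lamP)) * sE s + q * Real.exp (-γ * s) + (1/(2*lamP)) * ε := by
          rw [hKcdef, hfdef]
          have : ε/(2*lamP) = (1/(2*lamP)) * ε := by ring
          rw [this]
          linear_combination (Real.exp (-γ * s)) * hqe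
        have key2 : Vd s ≤ (-(1/(2*lamP)) * sE s + q * Real.exp (-γ * s)
            + (1/(2*lamP)) * ε) * (2 * sE s) := by
          have hrel : 2*(1/(2*lamP)) = 1/lamP := by field_simp
          have hexpand : (-(1/(2*lamP)) * sE s + q * Real.exp (-γ * s)
              + (1/(2*lamP)) * ε) * (2 * sE s)
              = -(2*(1/(2*lamP))) * sE s^2 + 2 * q * Real.exp (-γ * s) * sE s
                + (2*(1/(2*lamP))) * ε * sE s := by ring
          rw [hexpand, hrel]
          calc Vd s ≤ -(1/lamP) * V s + 2 * q * Real.exp (-γ * s) * Real.sqrt (V s) := hVdle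
            _ ≤ -(1/lamP) * sE s^2 + 2 * q * Real.exp (-γ * s) * sE s + (1/lamP) * ε * sE s := by
                have hil : (0:ℝ) < 1/lamP := by positivity
                nlinarith [mul_nonneg (mul_nonneg hq0 he.le) (sub_nonneg.2 hsqVs),
                  mul_nonneg (mul_nonneg hil.le hε.le) (sub_nonneg.2 hSe)]
        have h2S : (0:ℝ) < 2 * sE s := by linarith
        have hdiv := (div_le_iff₀ h2S).mpr key2
        have : fd s = Vd s / (2 * sE s) + M * (γ * Real.exp (-γ * s)) := by rw [hfddef]
        rw [this]
        linarith [hdiv, hinner]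
      have hcont : ContinuousOn f (Set.Icc 0 t) := fun s hs =>
        ((hfd s hs.1).continuousAt).continuousWithinAt
      have hGron := le_gronwallBound_of_liminf_deriv_right_le (f' := fd)
        (δ := Real.sqrt (V 0 + ε^2)) (K := Kc) (ε := ε/(2*lamP)) hcont
        (fun s hs r hr => ((hfd s hs.1).hasDerivWithinAt).liminf_right_slope_le hr)
        (by
          rw [hfdef, hsEdef]
          simp only [mul_zero, Real.exp_zero, mul_one]
          linarith [hM0])
        (fun s hs => hbound s hs.1) t (Set.right_mem_Icc.mpr ht)
      rw [sub_zero, gronwallBound_of_K_ne_0 (ne_of_lt hKcneg)] at hGron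
      have hratio : ε/(2*lamP)/Kc = -ε := by
        rw [hKcdef]
        field_simp
      rw [hratio] at hGron
      have hexple : Real.exp (Kc * t) ≤ 1 :=
        Real.exp_le_one_iff.mpr (mul_nonpos_of_nonpos_of_nonneg hKcneg.le ht)
      have hexppos : (0:ℝ) < Real.exp (Kc * t) := Real.exp_pos _
      have hδ : Real.sqrt (V 0 + ε^2) ≤ Real.sqrt (V 0) + ε := by
        have h7 : V 0 + ε^2 ≤ (Real.sqrt (V 0) + ε)^2 := by
          nlinarith [Real.sq_sqrt (hVnn 0), Real.sqrt_nonneg (V 0)]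
        calc Real.sqrt (V 0 + ε^2) ≤ Real.sqrt ((Real.sqrt (V 0) + ε)^2) := Real.sqrt_le_sqrt h7
          _ = Real.sqrt (V 0) + ε := Real.sqrt_sq (by positivity)
      have hft : f t = sE t - M * Real.exp (-γ * t) := by rw [hfdef]
      have h8 : Real.sqrt (V t) ≤ sE t := hsqV t
      rw [hft] at hGron
      have hGron' : sE t - M * Real.exp (-γ * t) ≤
          Real.sqrt (V 0 + ε^2) * Real.exp (Kc * t) + -ε * (Real.exp (Kc * t) - 1) := hGron
      have hint1 := mul_le_mul_of_nonneg_right hδ hexppos.le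
      have hint2 := mul_le_mul_of_nonneg_left hexple hε.le
      linarith [hGron', h8, hint1, hint2]
    by_contra hcon
    push_neg at hcon
    have h := key ((Real.sqrt (V t)
      - (Real.sqrt (V 0) * Real.exp (Kc * t) + M * Real.exp (-γ * t)))/4) (by linarith)
    linarith
  -- assemble the final bound
  refine ⟨cC * Real.sqrt (V 0) + cC * M + k, ?_, ?_⟩
  · have := mul_nonneg hcC0 (Real.sqrt_nonneg (V 0))
    have := mul_nonneg hcC0 hM0
    linarith
  intro t ht
  have hyeq : C ⬝ᵥ x t - ystar = C ⬝ᵥ w t + (z t - ystar) := by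
    rw [hwdef]
    simp only [dotProduct_sub, dotProduct_smul, smul_eq_mul, hreg2]
    ring
  have h1 : |C ⬝ᵥ w t| ≤ cC * Real.sqrt (V t) := by
    have h := hCw (w t)
    have hVt : V t = w t ⬝ᵥ (P *ᵥ w t) := by rw [hVdef]
    rwa [← hVt] at h
  have h2 := hzb t ht
  have hexp2 : Real.exp (-γtil * t) ≤ Real.exp (-γ * t) :=
    Real.exp_le_exp.mpr (by nlinarith)
  have hmt := hmain t ht
  have hKct : Real.exp (Kc * t) = Real.exp (-t/(2*lamP)) := by
    rw [hKcdef]; ring_nf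
  rw [hyeq]
  have p1 : 0 ≤ cC * Real.sqrt (V 0) * Real.exp (-γ * t) := by positivity
  have p2 : 0 ≤ cC * M * Real.exp (-t/(2*lamP)) :=
    mul_nonneg (mul_nonneg hcC0 hM0) (Real.exp_pos _).le
  have p3 : 0 ≤ k * Real.exp (-t/(2*lamP)) := mul_nonneg hk (Real.exp_pos _).le
  calc |C ⬝ᵥ w t + (z t - ystar)| ≤ |C ⬝ᵥ w t| + |z t - ystar| := abs_add_le _ _
    _ ≤ cC * Real.sqrt (V t) + k * Real.exp (-γ * t) :=
        add_le_add h1 ((h2).trans (mul_le_mul_of_nonneg_left hexp2 hk))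
    _ ≤ cC * (Real.sqrt (V 0) * Real.exp (-t/(2*lamP)) + M * Real.exp (-γ * t))
          + k * Real.exp (-γ * t) := by
        rw [← hKct]
        exact add_le_add_left (mul_le_mul_of_nonneg_left hmt hcC0) _
    _ ≤ (cC * Real.sqrt (V 0) + cC * M + k)
          * (Real.exp (-t/(2*lamP)) + Real.exp (-γ * t)) := by nlinarith [p1, p2, p3]
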